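/- Given an energy landscape, any two cycles are either disjoint or comparable by inclusion: if C and C' are cycles then C ∩ C' = ∅, or C ⊆ C', or C' ⊆ C. -/

import Mathlib

/- Abstract energy landscape: finite state space `X`, energy `H`, connectivity `q`. -/

variable {X : Type*}

/-- A path from `x` to `y`: a nonempty finite sequence of states with consecutive
states connected by `q`. -/
def IsPath (q : X → X → Prop) (ω : List X) (x y : X) : Prop :=
  ω ≠ [] ∧ ω.Chain' q ∧ ω.head? = some x ∧ ω.getLast? = some y

/-- The elevation (height) of a path: the maximal energy along it. -/
noncomputable def elev (H : X → ℝ) (ω : List X) : ℝ :=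
  sSup (H '' {z | z ∈ ω})

/-- The communication energy between two states: the minimal elevation over paths. -/
noncomputable def commE (H : X → ℝ) (q : X → X → Prop) (x y : X) : ℝ :=
  sInf {e | ∃ ω, IsPath q ω x y ∧ elev H ω = e}

/-- The communication energy between two sets of states. -/
noncomputable def commSet (H : X → ℝ) (q : X → X → Prop) (A B : Set X) : ℝ :=
  sInf {e | ∃ x ∈ A, ∃ y ∈ B, commE H q x y = e}

/-- A set of states is connected if any two of its states are joined by a path inside it. -/
def SetConn (q : X → X → Prop) (C : Set X) : Prop :=
  ∀ x ∈ C, ∀ y ∈ C, ∃ ω, IsPath q ω x y ∧ ∀ z ∈ ω, z ∈ C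

/-- The external boundary of a set of states. -/
def extBdry (q : X → X → Prop) (C : Set X) : Set X :=
  {y | y ∉ C ∧ ∃ x ∈ C, q x y}

/-- A non-trivial cycle: a connected set whose maximal internal energy is strictly
below the minimal energy on its external boundary. -/
def IsNontrivialCycle (H : X → ℝ) (q : X → X → Prop) (C : Set X) : Prop :=
  C.Nonempty ∧ SetConn q C ∧ sSup (H '' C) < sInf (H '' extBdry q C)

/-- A cycle: a singleton, or a non-trivial cycle. -/
def IsCycle (H : X → ℝ) (q : X → X → Prop) (C : Set X) : Prop :=
  (∃ x, C = {x}) ∨ IsNontrivialCycle H q C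

/-- If a chain starts outside `S` and ends inside `S`, it crosses the boundary. -/
lemma crossing_step (q : X → X → Prop) (S : Set X) :
    ∀ ω : List X, ω.Chain' q → ∀ x z, ω.head? = some x → ω.getLast? = some z →
      x ∉ S → z ∈ S → ∃ a b, a ∈ ω ∧ a ∉ S ∧ b ∈ S ∧ q a b
  | [] => by simp
  | [a] => by
      intro _ x z hx hz hxS hzS
      simp only [List.head?_cons, List.getLast?_singleton, Option.some.injEq] at hx hz
      subst hx; subst hz; exact absurd hzS hxS
  | a :: b :: t => by
      intro hch x z hx hz hxS hzS
      simp only [List.head?_cons, Option.some.injEq] at hx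
      subst hx
      simp only [List.Chain', List.isChain_cons_cons] at hch
      by_cases hb : b ∈ S
      · exact ⟨a, b, by simp, hxS, hb, hch.1⟩
      · have hz' : (b :: t).getLast? = some z := by
          rw [← hz]; simp [List.getLast?_cons_cons]
        obtain ⟨a', b', ha', h1, h2, h3⟩ :=
          crossing_step q S (b :: t) hch.2 b z rfl hz' hb hzS
        exact ⟨a', b', List.mem_cons_of_mem _ ha', h1, h2, h3⟩

/-- two cycles are either disjoint or comparable for inclusion. -/
theorem cycle_tree_structure [Fintype X] (H : X → ℝ) (q : X → X → Prop)
    (hsymm : ∀ x y, q x y → q y x)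
    (hirr : ∀ x y : X, ∃ ω, IsPath q ω x y)
    (C C' : Set X) (hC : IsCycle H q C) (hC' : IsCycle H q C') :
    C ∩ C' = ∅ ∨ C ⊆ C' ∨ C' ⊆ C := by
  rcases hC with ⟨x0, rfl⟩ | ⟨hCne, hCconn, hCgap⟩
  · by_cases hx : x0 ∈ C'
    · exact Or.inr (Or.inl (by simpa using hx))
    · refine Or.inl (Set.eq_empty_iff_forall_notMem.2 ?_)
      rintro y ⟨hy1, hy2⟩
      rw [Set.mem_singleton_iff] at hy1; subst hy1; exact hx hy2
  rcases hC' with ⟨x0, rfl⟩ | ⟨hC'ne, hC'conn, hC'gap⟩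
  · by_cases hx : x0 ∈ C
    · exact Or.inr (Or.inr (by simpa using hx))
    · refine Or.inl (Set.eq_empty_iff_forall_notMem.2 ?_)
      rintro y ⟨hy1, hy2⟩
      rw [Set.mem_singleton_iff] at hy2; subst hy2; exact hx hy1
  by_cases h1 : C ⊆ C'
  · exact Or.inr (Or.inl h1)
  by_cases h2 : C' ⊆ C
  · exact Or.inr (Or.inr h2)
  refine Or.inl (Set.eq_empty_iff_forall_notMem.2 ?_)
  rintro z ⟨hzC, hzC'⟩
  obtain ⟨x, hxC, hxC'⟩ := Set.not_subset.1 h1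
  obtain ⟨y, hyC', hyC⟩ := Set.not_subset.1 h2
  -- a path in C from x (outside C') to z (inside C') crosses ∂C'
  obtain ⟨ω, ⟨hne, hch, hhd, hlast⟩, hmem⟩ := hCconn x hxC z hzC
  obtain ⟨a, b, haω, haC', hbC', hqab⟩ :=
    crossing_step q C' ω hch x z hhd hlast hxC' hzC'
  have haC : a ∈ C := hmem a haω
  have habd : a ∈ extBdry q C' := ⟨haC', b, hbC', hsymm a b hqab⟩
  -- a path in C' from y (outside C) to z (inside C) crosses ∂C
  obtain ⟨ω', ⟨hne', hch', hhd', hlast'⟩, hmem'⟩ := hC'conn y hyC' z hzC'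
  obtain ⟨a', b', haω', haC2, hbC2, hqab'⟩ :=
    crossing_step q C ω' hch' y z hhd' hlast' hyC hzC
  have haC'2 : a' ∈ C' := hmem' a' haω'
  have habd' : a' ∈ extBdry q C := ⟨haC2, b', hbC2, hsymm a' b' hqab'⟩
  have bd1 : H a ≤ sSup (H '' C) :=
    le_csSup ((C.toFinite.image H).bddAbove) ⟨a, haC, rfl⟩
  have bd2 : sInf (H '' extBdry q C) ≤ H a' :=
    csInf_le (((extBdry q C).toFinite.image H).bddBelow) ⟨a', habd', rfl⟩
  have bd3 : H a' ≤ sSup (H '' C') :=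
    le_csSup ((C'.toFinite.image H).bddAbove) ⟨a', haC'2, rfl⟩
  have bd4 : sInf (H '' extBdry q C') ≤ H a :=
    csInf_le (((extBdry q C').toFinite.image H).bddBelow) ⟨a, habd, rfl⟩
  linarith
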